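/- arXiv:2111.14748 — 4 statements merged into one kernel-verified Lean document; each statement's English description precedes it below -/
import Mathlib

section
/- The integral over the unit disk of log|z| · 4/(1+|z|²)² with respect to Lebesgue measure equals -2π log 2. -/
open MeasureTheory Set

lemma key1 : ∫ x in (0:ℝ)..1, x * (Real.log x * (4 / (1 + x ^ 2) ^ 2)) = -Real.log 2 := by
  set G : ℝ → ℝ := fun y => 2 * (y * (y * Real.log y)) / (1 + y ^ 2) - Real.log (1 + y ^ 2)
    with hG
  have hcG : Continuous G := by
    have c1 : Continuous fun y : ℝ => y * (y * Real.log y) :=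
      continuous_id.mul Real.continuous_mul_log
    have c2 : Continuous fun y : ℝ => Real.log (1 + y ^ 2) := by
      apply Continuous.log (by continuity)
      intro x; positivity
    exact ((continuous_const.mul c1).div (by continuity) (fun x => by positivity)).sub c2
  have hderiv : ∀ x ∈ Ioo (0:ℝ) 1,
      HasDerivAt G (x * (Real.log x * (4 / (1 + x ^ 2) ^ 2))) x := by
    intro x hx
    have hx0 : x ≠ 0 := ne_of_gt hx.1
    have hdpos : (0:ℝ) < 1 + x ^ 2 := by positivity
    have hd : (1:ℝ) + x ^ 2 ≠ 0 := ne_of_gt hdpos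
    have l1 : HasDerivAt Real.log x⁻¹ x := Real.hasDerivAt_log hx0
    have l2 : HasDerivAt (fun y : ℝ => y * Real.log y) (1 * Real.log x + x * x⁻¹) x :=
      (hasDerivAt_id x).mul l1
    have l3 : HasDerivAt (fun y : ℝ => y * (y * Real.log y))
        (1 * (x * Real.log x) + x * (1 * Real.log x + x * x⁻¹)) x :=
      (hasDerivAt_id x).mul l2
    have l4 := l3.const_mul (2:ℝ)
    have l5 : HasDerivAt (fun y : ℝ => 1 + y ^ 2) (2 * x) x := by
      simpa using ((hasDerivAt_pow 2 x).const_add (1:ℝ))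
    have l6 := l4.div l5 hd
    have l7 := l5.log hd
    have l8 := l6.sub l7
    have e : x * (Real.log x * (4 / (1 + x ^ 2) ^ 2)) = (2 * (1 * (x * Real.log x) + x * (1 * Real.log x + x * x⁻¹)) * (1 + x ^ 2) - 2 * (x * (x * Real.log x)) * (2 * x)) / (1 + x ^ 2) ^ 2 - 2 * x / (1 + x ^ 2) := by
      field_simp
      ring
    rw [e]; exact l8
  have hint : IntervalIntegrable (fun x : ℝ => x * (Real.log x * (4 / (1 + x ^ 2) ^ 2)))
      MeasureTheory.volume 0 1 := by
    apply Continuous.intervalIntegrable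
    have c1 : Continuous fun x : ℝ => (x * Real.log x) * (4 / (1 + x ^ 2) ^ 2) :=
      Real.continuous_mul_log.mul
        (continuous_const.div (by continuity) (fun x => by positivity))
    convert c1 using 2 with x
    ring
  have ha : Filter.Tendsto G (nhdsWithin 0 (Ioi 0)) (nhds 0) := by
    have := (hcG.tendsto 0).mono_left (nhdsWithin_le_nhds (s := Ioi (0:ℝ)))
    simpa [hG, Real.log_one] using this
  have hb : Filter.Tendsto G (nhdsWithin 1 (Iio 1)) (nhds (-Real.log 2)) := by
    have := (hcG.tendsto 1).mono_left (nhdsWithin_le_nhds (s := Iio (1:ℝ)))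
    simpa [hG, Real.log_one, one_add_one_eq_two] using this
  have h := intervalIntegral.integral_eq_sub_of_hasDerivAt_of_tendsto zero_lt_one hderiv hint ha hb
  simpa using h

/-- The integral over the unit disk of `4 log|z|/(1+|z|²)²` equals `-2π log 2`. -/
theorem stmt1 :
    ∫ z in Metric.ball (0 : ℂ) 1,
      Real.log ‖z‖ * (4 / (1 + ‖z‖ ^ 2) ^ 2)
    = -(2 * Real.pi * Real.log 2) := by
  set g : ℝ → ℝ := Set.indicator (Set.Iio 1) (fun r => Real.log r * (4 / (1 + r ^ 2) ^ 2))
    with hg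
  have step1 : (∫ z in Metric.ball (0 : ℂ) 1,
      Real.log ‖z‖ * (4 / (1 + ‖z‖ ^ 2) ^ 2)) = ∫ z : ℂ, g ‖z‖ := by
    rw [← integral_indicator measurableSet_ball]
    congr 1 with z
    simp only [hg, Set.indicator, Metric.mem_ball, dist_zero_right, Set.mem_Iio]
  rw [step1, MeasureTheory.integral_fun_norm_addHaar (volume : Measure ℂ) g]
  have hvol : (volume : Measure ℂ).real (Metric.ball 0 1) = Real.pi := by
    simp [Measure.real, Complex.volume_ball]
  have hrank : Module.finrank ℝ ℂ = 2 := Complex.finrank_real_complex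
  rw [hrank, hvol]
  have step3 : (∫ y in Ioi (0:ℝ), y ^ (2 - 1) • g y)
      = ∫ y in (0:ℝ)..1, y * (Real.log y * (4 / (1 + y ^ 2) ^ 2)) := by
    have : ∀ y : ℝ, y ^ (2 - 1) • g y
        = Set.indicator (Set.Iio 1) (fun y => y * (Real.log y * (4 / (1 + y ^ 2) ^ 2))) y := by
      intro y
      simp only [hg, Set.indicator, pow_one, smul_eq_mul]
      split <;> simp
    simp_rw [this]
    rw [integral_indicator measurableSet_Iio, Measure.restrict_restrict measurableSet_Iio,
      Set.inter_comm, Set.Ioi_inter_Iio,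
      intervalIntegral.integral_of_le zero_le_one, integral_Ioc_eq_integral_Ioo]
  rw [step3, key1]
  simp only [smul_eq_mul, nsmul_eq_mul]
  push_cast
  ring
end

section
/- If f : 𝔻 → ℂ is holomorphic with f' never zero, then μ(z) = log|f'(z)| - log(1+|f(z)|²) + log 2 satisfies the Liouville equation -Δμ = e^{2μ} on 𝔻. -/
open Complex ComplexConjugate
noncomputable def RM (c : ℂ) : ℂ →L[ℝ] ℝ :=
  Complex.reCLM.comp ((c • (1 : ℂ →L[ℂ] ℂ)).restrictScalars ℝ)
lemma RM_apply (c t : ℂ) : RM c t = (c * t).re := by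
  simp [RM, smul_eq_mul]
noncomputable def CM (c : ℂ) : ℂ →L[ℝ] ℂ :=
  (c • (1 : ℂ →L[ℂ] ℂ)).restrictScalars ℝ
lemma CM_apply (c t : ℂ) : CM c t = c * t := by
  simp [CM, smul_eq_mul]
lemma hasFDerivAt_re_comp {H : ℂ → ℂ} {w : ℂ} (h : DifferentiableAt ℂ H w) :
    HasFDerivAt (fun x => (H x).re) (RM (deriv H w)) w := by
  have h1 := (h.hasDerivAt.hasFDerivAt).restrictScalars ℝ
  have h2 := Complex.reCLM.hasFDerivAt.comp w h1
  convert h2 using 1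
  all_goals try rfl
  ext t
  simp [RM, smul_eq_mul, mul_comm]
lemma hasFDerivAt_cpx {H : ℂ → ℂ} {w : ℂ} (h : DifferentiableAt ℂ H w) :
    HasFDerivAt H (CM (deriv H w)) w := by
  have h1 := (h.hasDerivAt.hasFDerivAt).restrictScalars ℝ
  convert h1 using 1
  all_goals try rfl
  ext t
  simp [CM, smul_eq_mul, mul_comm]
noncomputable def Cj : ℂ →L[ℝ] ℂ := Complex.conjCLE.toContinuousLinearMap
lemma Cj_apply (t : ℂ) : Cj t = conj t := rfl
lemma hasFDerivAt_conj_comp {H : ℂ → ℂ} {w : ℂ} (h : DifferentiableAt ℂ H w) :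
    HasFDerivAt (fun x => conj (H x)) (Cj.comp (CM (deriv H w))) w :=
  Cj.hasFDerivAt.comp w (hasFDerivAt_cpx h)
lemma normSq_hasFDerivAt {f : ℂ → ℂ} {w : ℂ} (hf : DifferentiableAt ℂ f w) :
    HasFDerivAt (fun x => 1 + Complex.normSq (f x)) (RM (2 * conj (f w) * deriv f w)) w := by
  have hre := hasFDerivAt_re_comp hf
  have him : HasFDerivAt (fun x => (f x).im)
      (Complex.imCLM.comp (CM (deriv f w))) w :=
    Complex.imCLM.hasFDerivAt.comp w (hasFDerivAt_cpx hf)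
  have h2 := ((hre.mul hre).add (him.mul him)).const_add 1
  have heq : (fun x => 1 + Complex.normSq (f x))
      = fun x => 1 + ((f x).re * (f x).re + (f x).im * (f x).im) := by
    funext x; rw [Complex.normSq_apply]
  rw [heq]
  convert h2 using 1
  all_goals try rfl
  ext t
  simp [RM_apply, CM_apply, Complex.mul_re, Complex.mul_im]
  ring
lemma v_hasFDerivAt {f : ℂ → ℂ} {w : ℂ} (hf : DifferentiableAt ℂ f w) :
    HasFDerivAt (fun x => Real.log (1 + Complex.normSq (f x)))
      ((1 + Complex.normSq (f w))⁻¹ • RM (2 * conj (f w) * deriv f w)) w := by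
  have hS : (1:ℝ) + Complex.normSq (f w) ≠ 0 := by
    have := Complex.normSq_nonneg (f w); intro h; linarith
  exact (normSq_hasFDerivAt hf).log hS

lemma phi_deriv_eval (f G : ℂ → ℂ) (z t : ℂ)
    (hf : DifferentiableAt ℂ f z) (hg : DifferentiableAt ℂ (deriv f) z)
    (hG : DifferentiableAt ℂ G z) :
    fderiv ℝ (fun w => (G w * t).re
        - (1 + Complex.normSq (f w))⁻¹ * (2 * conj (f w) * deriv f w * t).re) z t
    = (deriv G z * t * t).re
      - (1 + Complex.normSq (f z))⁻¹ * (2 * (conj (f z) * (deriv (deriv f) z * t * t)).re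
          + 2 * Complex.normSq (deriv f z * t))
      + ((1 + Complex.normSq (f z))⁻¹)^2 * (2 * (conj (f z) * (deriv f z * t)).re)
          * (2 * (conj (f z) * (deriv f z * t)).re) := by
  have hS0 : (1:ℝ) + Complex.normSq (f z) ≠ 0 := by
    have := Complex.normSq_nonneg (f z); intro h; linarith
  have hN := normSq_hasFDerivAt hf
  have hSinv := (hasFDerivAt_inv' (𝕜 := ℝ) hS0).comp z hN
  have hconj := hasFDerivAt_conj_comp hf
  have hgt : HasFDerivAt (fun w => deriv f w * t) (CM (deriv (deriv f) z * t)) z := by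
    have h1 := hasFDerivAt_cpx (hg.mul_const t)
    rwa [deriv_mul_const hg] at h1
  have hmul := hconj.mul hgt
  have hre2 := Complex.reCLM.hasFDerivAt.comp z hmul
  have hnum := hre2.const_mul (2:ℝ)
  have hterm2 := hSinv.mul hnum
  have hGt : DifferentiableAt ℂ (fun w => G w * t) z := hG.mul_const t
  have h1 := hasFDerivAt_re_comp hGt
  rw [deriv_mul_const hG] at h1
  have hfun : (fun w => (G w * t).re - (1 + Complex.normSq (f w))⁻¹ * (2 * conj (f w) * deriv f w * t).re)
      = fun w => (G w * t).re - (1 + Complex.normSq (f w))⁻¹ * (2 * ((conj (f w)) * (deriv f w * t)).re) := by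
    funext w
    congr 1
    rw [show (2 * conj (f w) * deriv f w * t : ℂ) = 2 * (conj (f w) * (deriv f w * t)) by ring]
    simp [Complex.mul_re]
  have hh := h1.sub hterm2
  simp only [Function.comp_def, Complex.reCLM_apply] at hh
  have hh' : HasFDerivAt (fun w => (G w * t).re
      - (1 + Complex.normSq (f w))⁻¹ * (2 * ((conj (f w)) * (deriv f w * t)).re)) _ z := hh
  rw [hfun, hh'.fderiv]
  generalize (1 + Complex.normSq (f z))⁻¹ = V
  simp [RM_apply, CM_apply, Cj_apply, ContinuousLinearMap.mulLeftRight_apply,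
    Complex.mul_re, Complex.mul_im, Complex.normSq_mul, Complex.normSq_apply]
  ring

/-- The Euclidean Laplacian of a function `u : ℂ → E`, viewing `ℂ ≅ ℝ²`. -/
noncomputable def laplacian {E : Type*} [NormedAddCommGroup E] [NormedSpace ℝ E]
    (u : ℂ → E) (z : ℂ) : E :=
  fderiv ℝ (fun w => fderiv ℝ u w 1) z 1 +
    fderiv ℝ (fun w => fderiv ℝ u w Complex.I) z Complex.I

lemma laplacian_congr {u v : ℂ → ℝ} {z : ℂ} (h : u =ᶠ[nhds z] v) :
    laplacian u z = laplacian v z := by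
  have h1 : ∀ t : ℂ, (fun w => fderiv ℝ u w t) =ᶠ[nhds z] (fun w => fderiv ℝ v w t) :=
    fun t => (h.fderiv (𝕜 := ℝ)).mono fun w hw => by simp only [hw]
  unfold laplacian
  rw [(h1 1).fderiv_eq, (h1 Complex.I).fderiv_eq]

/-- If `f` is holomorphic on 𝔻 with `f'` never zero, then
`μ(z) = log|f'(z)| - log(1+|f(z)|²) + log 2` satisfies the Liouville equation
`-Δμ = e^{2μ}` on 𝔻. -/
theorem stmt10 (f : ℂ → ℂ) (hf : DifferentiableOn ℂ f (Metric.ball 0 1))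
    (hf' : ∀ z ∈ Metric.ball (0 : ℂ) 1, deriv f z ≠ 0) :
    ∀ z ∈ Metric.ball (0 : ℂ) 1,
      -laplacian (fun w : ℂ =>
          Real.log (‖deriv f w‖) - Real.log (1 + ‖f w‖ ^ 2)
            + Real.log 2) z
        = Real.exp (2 * (Real.log (‖deriv f z‖)
            - Real.log (1 + ‖f z‖ ^ 2) + Real.log 2)) := by
  intro z hz
  have hb : deriv f z ≠ 0 := hf' z hz
  have hA : AnalyticOnNhd ℂ f (Metric.ball 0 1) := hf.analyticOnNhd Metric.isOpen_ball
  have hAg := hA.deriv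
  have hball : ∀ᶠ w in nhds z, w ∈ Metric.ball (0:ℂ) 1 := Metric.isOpen_ball.mem_nhds hz
  have hgc : ContinuousAt (deriv f) z := (hAg z hz).continuousAt
  have hne : ∀ᶠ w in nhds z, deriv f w ≠ 0 := hgc.eventually_ne hb
  have hslit : ∀ᶠ w in nhds z, deriv f w / deriv f z ∈ Complex.slitPlane := by
    have h1 : ContinuousAt (fun w => deriv f w / deriv f z) z := hgc.div_const _
    have h2 : deriv f z / deriv f z ∈ Complex.slitPlane := by simp [div_self hb]
    exact h1.eventually_mem (Complex.isOpen_slitPlane.mem_nhds h2)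
  have hgdiff : ∀ᶠ w in nhds z, DifferentiableAt ℂ (deriv f) w := by
    filter_upwards [hball] with w hw
    exact (hAg w hw).differentiableAt
  have hfdiff : ∀ᶠ w in nhds z, DifferentiableAt ℂ f w := by
    filter_upwards [hball] with w hw
    exact (hA w hw).differentiableAt
  set H := fun w => Complex.log (deriv f w / deriv f z) with hHdef
  have hHdiff : ∀ᶠ w in nhds z, DifferentiableAt ℂ H w := by
    filter_upwards [hgdiff, hslit] with w h1 h2
    exact (Complex.differentiableAt_log h2).comp w (h1.div_const _)
  have hHa : AnalyticAt ℂ H z := by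
    rw [hHdef]
    have hm : deriv f z / deriv f z ∈ Complex.slitPlane := by simp [div_self hb]
    exact ((hAg z hz).div analyticAt_const hb).clog hm
  have hdH : DifferentiableAt ℂ (deriv H) z := by
    rcases eventually_nhds_iff.mp hHa.eventually_analyticAt with ⟨s, hs, hso, hzs⟩
    exact ((AnalyticOnNhd.deriv (fun x hx => hs x hx)) z hzs).differentiableAt
  have hfdz : DifferentiableAt ℂ f z := (hA z hz).differentiableAt
  have hgdz : DifferentiableAt ℂ (deriv f) z := (hAg z hz).differentiableAt
  set K := Real.log (‖deriv f z‖) + Real.log 2 with hKdef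
  have hequ : (fun w : ℂ => Real.log (‖deriv f w‖) - Real.log (1 + ‖f w‖ ^ 2)
      + Real.log 2)
      =ᶠ[nhds z] fun w => (H w).re - Real.log (1 + Complex.normSq (f w)) + K := by
    filter_upwards [hne] with w h1
    have hre : (H w).re = Real.log (‖deriv f w‖) - Real.log (‖deriv f z‖) := by
      rw [hHdef]
      simp only [Complex.log_re, norm_div]
      rw [Real.log_div (norm_ne_zero_iff.mpr h1) (norm_ne_zero_iff.mpr hb)]
    rw [hre, Complex.sq_norm]
    ring
  rw [laplacian_congr hequ]
  have hfd : ∀ᶠ w in nhds z, ∀ t : ℂ,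
      fderiv ℝ (fun w => (H w).re - Real.log (1 + Complex.normSq (f w)) + K) w t
      = (deriv H w * t).re - (1 + Complex.normSq (f w))⁻¹ * (2 * (starRingEnd ℂ) (f w) * deriv f w * t).re := by
    filter_upwards [hHdiff, hfdiff] with w h1 h2
    intro t
    have hD := ((hasFDerivAt_re_comp h1).sub (v_hasFDerivAt h2)).add_const K
    have hD' : HasFDerivAt (fun w => (H w).re - Real.log (1 + Complex.normSq (f w)) + K) _ w := hD
    rw [hD'.fderiv]
    simp [RM_apply]
  have e1 : (fun w => fderiv ℝ (fun w => (H w).re - Real.log (1 + Complex.normSq (f w)) + K) w 1)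
      =ᶠ[nhds z] (fun w => (deriv H w * 1).re
        - (1 + Complex.normSq (f w))⁻¹ * (2 * (starRingEnd ℂ) (f w) * deriv f w * 1).re) :=
    hfd.mono fun w hw => hw 1
  have eI : (fun w => fderiv ℝ (fun w => (H w).re - Real.log (1 + Complex.normSq (f w)) + K) w Complex.I)
      =ᶠ[nhds z] (fun w => (deriv H w * Complex.I).re
        - (1 + Complex.normSq (f w))⁻¹ * (2 * (starRingEnd ℂ) (f w) * deriv f w * Complex.I).re) :=
    hfd.mono fun w hw => hw Complex.I
  have hS1 : (0:ℝ) < 1 + ‖f z‖ ^ 2 := by positivity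
  have habs : 0 < ‖deriv f z‖ := norm_pos_iff.mpr hb
  have hRHS : Real.exp (2 * (Real.log (‖deriv f z‖)
      - Real.log (1 + ‖f z‖ ^ 2) + Real.log 2))
      = 4 * ‖deriv f z‖ ^ 2 / (1 + ‖f z‖ ^ 2) ^ 2 := by
    rw [show 2 * (Real.log (‖deriv f z‖) - Real.log (1 + ‖f z‖ ^ 2)
        + Real.log 2)
      = (Real.log (‖deriv f z‖) + Real.log (‖deriv f z‖) + Real.log 2
          + Real.log 2)
        - (Real.log (1 + ‖f z‖ ^ 2) + Real.log (1 + ‖f z‖ ^ 2)) by ring,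
      Real.exp_sub, Real.exp_add, Real.exp_add, Real.exp_add, Real.exp_add,
      Real.exp_log habs, Real.exp_log hS1, Real.exp_log (by norm_num : (0:ℝ) < 2)]
    ring
  rw [hRHS]
  have hlap : laplacian (fun w => (H w).re - Real.log (1 + Complex.normSq (f w)) + K) z
      = fderiv ℝ (fun w => (deriv H w * 1).re
          - (1 + Complex.normSq (f w))⁻¹ * (2 * (starRingEnd ℂ) (f w) * deriv f w * 1).re) z 1
        + fderiv ℝ (fun w => (deriv H w * Complex.I).re
          - (1 + Complex.normSq (f w))⁻¹ * (2 * (starRingEnd ℂ) (f w) * deriv f w * Complex.I).re) z Complex.I := by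
    unfold laplacian
    rw [e1.fderiv_eq, eI.fderiv_eq]
  rw [hlap, phi_deriv_eval f (deriv H) z 1 hfdz hgdz hdH,
    phi_deriv_eval f (deriv H) z Complex.I hfdz hgdz hdH]
  have hSne : (1:ℝ) + Complex.normSq (f z) ≠ 0 := by
    have := Complex.normSq_nonneg (f z); intro h; linarith
  rw [Complex.sq_norm, Complex.sq_norm, eq_div_iff (pow_ne_zero 2 hSne)]
  field_simp
  simp [Complex.mul_re, Complex.mul_im, Complex.normSq_apply]
  ring
end

section
/- For f(z) = z e^{i log log z} on a half-disk 𝔻₊(0,ε) = {z : Im z > 0, |z| < ε} with ε small (using the principal branch of log on the upper half-plane), one has f''(z)/f'(z) = i(-1 + i + log z)/(z log z (i + log z)), and ∫_{𝔻(0,1/2)} |f''/f'|² |dz|² ≤ 4π/log 2 + 4π/(3 log² 2) < ∞. -/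
open MeasureTheory Set Filter Complex

noncomputable def ff : ℂ → ℂ := fun w => w * Complex.exp (Complex.I * Complex.log (Complex.log w))
noncomputable def gg : ℂ → ℂ := fun w => Complex.exp (Complex.I * Complex.log (Complex.log w)) * (1 + Complex.I * (Complex.log w)⁻¹)

lemma basic {w : ℂ} (hw : w.im ≠ 0) :
    w ≠ 0 ∧ w ∈ slitPlane ∧ Complex.log w ≠ 0 ∧ Complex.log w ∈ slitPlane := by
  have h1 : w ∈ slitPlane := mem_slitPlane_iff.2 (Or.inr hw)
  have harg : w.arg ≠ 0 := by
    intro h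
    exact hw (arg_eq_zero_iff.1 h).2
  have h2 : (Complex.log w).im ≠ 0 := by rwa [log_im]
  refine ⟨slitPlane_ne_zero h1, h1, ?_, mem_slitPlane_iff.2 (Or.inr h2)⟩
  intro h
  rw [h] at h2
  exact h2 rfl

lemma hasDerivAt_ff {w : ℂ} (hw : w.im ≠ 0) : HasDerivAt ff (gg w) w := by
  obtain ⟨hw0, hws, hl0, hls⟩ := basic hw
  have h1 : HasDerivAt Complex.log w⁻¹ w := Complex.hasDerivAt_log hws
  have h2 : HasDerivAt Complex.log (Complex.log w)⁻¹ (Complex.log w) := Complex.hasDerivAt_log hls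
  have h3 : HasDerivAt (fun w => Complex.log (Complex.log w)) ((Complex.log w)⁻¹ * w⁻¹) w := h2.comp w h1
  have h4 := (h3.const_mul Complex.I).cexp
  have h5 := (hasDerivAt_id w).mul h4
  refine h5.congr_deriv ?_
  simp only [gg, id]
  field_simp [gg]

lemma deriv_ratio {z : ℂ} (hz : z.im ≠ 0) (hIL : Complex.I + Complex.log z ≠ 0) :
    deriv (deriv ff) z / deriv ff z
      = Complex.I * (-1 + Complex.I + Complex.log z)
          / (z * Complex.log z * (Complex.I + Complex.log z)) := by
  obtain ⟨hz0, hzs, hl0, hls⟩ := basic hz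
  have hUopen : IsOpen {w : ℂ | w.im ≠ 0} :=
    isOpen_compl_iff.2 (isClosed_eq Complex.continuous_im continuous_const)
  have hev : deriv ff =ᶠ[nhds z] gg :=
    eventually_of_mem (hUopen.mem_nhds hz) (fun w hw => (hasDerivAt_ff hw).deriv)
  have h1 : HasDerivAt Complex.log z⁻¹ z := Complex.hasDerivAt_log hzs
  have h2 : HasDerivAt Complex.log (Complex.log z)⁻¹ (Complex.log z) := Complex.hasDerivAt_log hls
  have h3 : HasDerivAt (fun w => Complex.log (Complex.log w)) ((Complex.log z)⁻¹ * z⁻¹) z := h2.comp z h1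
  have hA := (h3.const_mul Complex.I).cexp
  have hB : HasDerivAt (fun w : ℂ => 1 + Complex.I * (Complex.log w)⁻¹)
      (Complex.I * (-(z⁻¹) / (Complex.log z) ^ 2)) z := ((h1.inv hl0).const_mul Complex.I).const_add 1
  have hgg : HasDerivAt gg
      (Complex.exp (Complex.I * Complex.log (Complex.log z)) * (Complex.I * ((Complex.log z)⁻¹ * z⁻¹))
          * (1 + Complex.I * (Complex.log z)⁻¹)
        + Complex.exp (Complex.I * Complex.log (Complex.log z)) * (Complex.I * (-(z⁻¹) / (Complex.log z) ^ 2))) z :=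
    hA.mul hB
  rw [hev.deriv_eq, hgg.deriv, (hasDerivAt_ff hz).deriv]
  have hE := Complex.exp_ne_zero (Complex.I * Complex.log (Complex.log z))
  have hB0 : (1 : ℂ) + Complex.I * (Complex.log z)⁻¹ ≠ 0 := by
    intro h
    apply hIL
    have h2 : ((1 : ℂ) + Complex.I * (Complex.log z)⁻¹) * Complex.log z = 0 := by
      rw [h, zero_mul]
    rw [add_mul, one_mul, mul_assoc, inv_mul_cancel₀ hl0, mul_one] at h2
    rw [add_comm]
    linear_combination h2
  have hden : z * Complex.log z * (Complex.I + Complex.log z) ≠ 0 :=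
    mul_ne_zero (mul_ne_zero hz0 hl0) hIL
  rw [gg, div_eq_div_iff (mul_ne_zero hE hB0) hden]
  field_simp
  ring

lemma keyineqL (L a : ℝ) (hL : 0.69 ≤ L) :
    L^4*((L+1)^2+(1+a)^2) ≤ (2*L^2+5/4)*(L^2+a^2)*(L^2+(1+a)^2) := by
  have h0 : (0:ℝ) < L := by nlinarith
  nlinarith [mul_nonneg (sub_nonneg.2 hL) (sq_nonneg (a+2/5)),
    mul_nonneg (sub_nonneg.2 hL) (sq_nonneg (L*a)),
    mul_nonneg (sub_nonneg.2 hL) (sq_nonneg (L*(1+a))),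
    mul_nonneg (sub_nonneg.2 hL) (sq_nonneg (a*(1+a))),
    sq_nonneg (a+2/5), sq_nonneg (L*a+L/2), sq_nonneg (a*a+a), sq_nonneg (L*L-L),
    mul_pos h0 h0,
    mul_nonneg (mul_nonneg (sub_nonneg.2 hL) h0.le) (sq_nonneg a),
    mul_nonneg (mul_nonneg (sub_nonneg.2 hL) h0.le) (sq_nonneg (1+a)),
    mul_nonneg (mul_nonneg (sub_nonneg.2 hL) h0.le) (sq_nonneg (a*(1+a)))]

lemma keyineq (x a : ℝ) (hx : x ≤ -0.69) :
    ((x-1)^2+(1+a)^2) * x^4 ≤ (2*x^2+5/4)*(x^2+a^2)*(x^2+(1+a)^2) := by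
  have h := keyineqL (-x) a (by linarith)
  calc ((x-1)^2+(1+a)^2) * x^4 = (-x)^4*(((-x)+1)^2+(1+a)^2) := by ring
    _ ≤ (2*(-x)^2+5/4)*((-x)^2+a^2)*((-x)^2+(1+a)^2) := h
    _ = (2*x^2+5/4)*(x^2+a^2)*(x^2+(1+a)^2) := by ring

lemma bnd {z : ℂ} (hz : z.im ≠ 0) (hlt : norm z < 1/2) :
    (norm (Complex.I * (-1 + Complex.I + Complex.log z)
        / (z * Complex.log z * (Complex.I + Complex.log z))))^2
      ≤ 2/((norm z)^2*(Real.log (norm z))^2)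
        + (5/4)/((norm z)^2*(Real.log (norm z))^4) := by
  have hz0 : z ≠ 0 := fun h => hz (by simp [h])
  have hr : 0 < norm z := norm_pos_iff.mpr hz0
  set r := norm z with hrdef
  set x := Real.log r with hxdef
  set a := z.arg with hadef
  have hx : x ≤ -0.69 := by
    have h1 : x < Real.log (1/2) := Real.log_lt_log hr hlt
    have h2 : Real.log (1/2) = -Real.log 2 := by
      rw [one_div, Real.log_inv]
    have h3 : (0.6931471803 : ℝ) < Real.log 2 := Real.log_two_gt_d9
    rw [h2] at h1
    linarith
  have hx0 : x < 0 := by linarith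
  have hN : (norm (-1 + Complex.I + Complex.log z))^2 = (x-1)^2 + (1+a)^2 := by
    rw [Complex.sq_norm, Complex.normSq_apply]
    simp [Complex.log_re, Complex.log_im]
    ring
  have hL2 : (norm (Complex.log z))^2 = x^2 + a^2 := by
    rw [Complex.sq_norm, Complex.normSq_apply]
    simp [Complex.log_re, Complex.log_im]
    ring
  have hIL2 : (norm (Complex.I + Complex.log z))^2 = x^2 + (1+a)^2 := by
    rw [Complex.sq_norm, Complex.normSq_apply]
    simp [Complex.log_re, Complex.log_im]
    ring
  have hLHS : (norm (Complex.I * (-1 + Complex.I + Complex.log z)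
        / (z * Complex.log z * (Complex.I + Complex.log z))))^2
      = ((x-1)^2 + (1+a)^2) / (r^2 * (x^2+a^2) * (x^2+(1+a)^2)) := by
    rw [norm_div, norm_mul, norm_mul, norm_mul, Complex.norm_I, one_mul, div_pow, mul_pow, mul_pow,
      hN, hL2, hIL2]
  rw [hLHS]
  have hxne : x ≠ 0 := ne_of_lt hx0
  have hrne : r ≠ 0 := ne_of_gt hr
  have hx2 : (0:ℝ) < x^2 := by nlinarith
  have hpa : (0:ℝ) < x^2 + a^2 := by nlinarith [sq_nonneg a]
  have hpb : (0:ℝ) < x^2 + (1+a)^2 := by nlinarith [sq_nonneg (1+a)]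
  have hx4 : (0:ℝ) < x^4 := by nlinarith
  have hr2 : (0:ℝ) < r^2 := by nlinarith
  have key := keyineq x a hx
  have step1 : ((x-1)^2 + (1+a)^2) / (r^2 * (x^2+a^2) * (x^2+(1+a)^2))
      ≤ (2*x^2+5/4) / (r^2 * x^4) := by
    rw [div_le_div_iff₀ (mul_pos (mul_pos hr2 hpa) hpb) (mul_pos hr2 hx4)]
    linarith [mul_le_mul_of_nonneg_left key (sq_nonneg r)]
  refine step1.trans (le_of_eq ?_)
  field_simp

noncomputable def ψ : ℝ → ℝ := fun r => 2*(r*(Real.log r)^2)⁻¹ + (5/4)*(r*(Real.log r)^4)⁻¹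
noncomputable def GG : ℝ → ℝ := fun r => -2*(Real.log r)⁻¹ - (5/12)*((Real.log r)⁻¹)^3

lemma logne {r : ℝ} (h0 : 0 < r) (h1 : r < 1) : Real.log r ≠ 0 := by
  have := Real.log_neg h0 h1
  linarith

lemma GG_deriv {r : ℝ} (hr : r ∈ Ioo (0:ℝ) (1/2)) : HasDerivAt GG (ψ r) r := by
  obtain ⟨h0, h1⟩ := hr
  have hxne : Real.log r ≠ 0 := logne h0 (by linarith)
  have hrne : r ≠ 0 := ne_of_gt h0
  have hlog : HasDerivAt Real.log r⁻¹ r := Real.hasDerivAt_log hrne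
  have h2 := hlog.inv hxne
  have h3 := h2.pow 3
  have hd := (h2.const_mul (-2 : ℝ)).sub (h3.const_mul ((5:ℝ)/12))
  refine hd.congr_deriv ?_
  rw [ψ]
  simp only [Pi.inv_apply, Nat.cast_ofNat, show (3:ℕ) - 1 = 2 from rfl]
  field_simp
  ring

lemma GG_cont : ContinuousOn GG (Icc (0:ℝ) (1/2)) := by
  intro t ht
  rcases eq_or_ne t 0 with rfl | ht0
  · have hG0 : GG 0 = 0 := by simp [GG]
    rw [ContinuousWithinAt, hG0]
    have hlt : Tendsto Real.log (nhdsWithin 0 (Ioi (0:ℝ))) atBot :=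
      Real.tendsto_log_nhdsGT_zero
    have hneg : Tendsto (fun r => -Real.log r) (nhdsWithin 0 (Ioi (0:ℝ))) atTop :=
      tendsto_neg_atBot_atTop.comp hlt
    have t1 : Tendsto (fun r => (Real.log r)⁻¹) (nhdsWithin 0 (Ioi (0:ℝ))) (nhds 0) := by
      have := hneg.inv_tendsto_atTop
      have heq : (fun r => ((-Real.log r)⁻¹ : ℝ)) = fun r => -(Real.log r)⁻¹ := by
        funext r; rw [inv_neg]
      rw [Pi.inv_def] at this
      simp only [heq] at this
      have := this.neg
      simpa using this
    have T : Tendsto GG (nhdsWithin 0 (Ioi (0:ℝ))) (nhds 0) := by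
      have h := (t1.const_mul (-2:ℝ)).sub ((t1.pow 3).const_mul ((5:ℝ)/12))
      rw [show (-2:ℝ) * 0 - 5/12 * 0^3 = 0 by norm_num] at h
      exact h
    have hsub : Icc (0:ℝ) (1/2) ⊆ insert 0 (Ioi 0) := by
      intro y hy
      rcases eq_or_ne y 0 with rfl | hy0
      · exact mem_insert _ _
      · exact mem_insert_of_mem _ (lt_of_le_of_ne hy.1 (Ne.symm hy0))
    refine Tendsto.mono_left ?_ (nhdsWithin_mono 0 hsub)
    rw [nhdsWithin_insert]
    rw [tendsto_sup]
    constructor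
    · have : GG 0 = 0 := by simp [GG]
      simpa [this] using tendsto_pure_nhds GG 0
    · exact T
  · have htpos : 0 < t := lt_of_le_of_ne ht.1 (Ne.symm ht0)
    have hxne : Real.log t ≠ 0 := logne htpos (by linarith [ht.2])
    apply ContinuousAt.continuousWithinAt
    have hc : ContinuousAt Real.log t := Real.continuousAt_log ht0
    exact ((hc.inv₀ hxne).const_smul (-2:ℝ)).sub (((hc.inv₀ hxne).pow 3).const_smul ((5:ℝ)/12))

lemma psi_nonneg {r : ℝ} (h0 : 0 < r) : 0 ≤ ψ r := by
  rw [ψ]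
  have h1 : (0:ℝ) ≤ (r*(Real.log r)^2)⁻¹ :=
    inv_nonneg.2 (mul_nonneg h0.le (sq_nonneg _))
  have h4 : (0:ℝ) ≤ (Real.log r)^4 := by positivity
  have h2 : (0:ℝ) ≤ (r*(Real.log r)^4)⁻¹ := inv_nonneg.2 (mul_nonneg h0.le h4)
  linarith

lemma oneD_int : IntegrableOn ψ (Ioc (0:ℝ) (1/2)) volume :=
  intervalIntegral.integrableOn_deriv_of_nonneg GG_cont (fun x hx => GG_deriv hx)
    (fun x hx => psi_nonneg hx.1)

lemma oneD_val : ∫ r in Ioc (0:ℝ) (1/2), ψ r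
    = 2*(Real.log 2)⁻¹ + (5/12)*((Real.log 2)⁻¹)^3 := by
  have h2 : (0:ℝ) ≤ 1/2 := by norm_num
  have hii : IntervalIntegrable ψ volume 0 (1/2) :=
    (intervalIntegrable_iff_integrableOn_Ioc_of_le h2).2 oneD_int
  have := intervalIntegral.integral_eq_sub_of_hasDeriv_right_of_le h2 GG_cont
    (fun x hx => (GG_deriv hx).hasDerivWithinAt) hii
  rw [intervalIntegral.integral_of_le h2] at this
  rw [this]
  have hG0 : GG 0 = 0 := by simp [GG]
  have hlog : Real.log (1/2 : ℝ) = -Real.log 2 := by rw [one_div, Real.log_inv]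
  rw [hG0, GG, hlog]
  rw [inv_neg]
  ring

lemma ILne {z : ℂ} (him : z.im ≠ 0) (hlt : norm z < 1/2) :
    Complex.I + Complex.log z ≠ 0 := by
  intro h
  have hre : (Complex.I + Complex.log z).re = 0 := by rw [h]; rfl
  simp only [Complex.add_re, Complex.I_re, Complex.log_re, zero_add] at hre
  rcases Real.log_eq_zero.1 hre with h0 | h1 | h2
  · exact him (by simp [norm_eq_zero.1 h0])
  · rw [h1] at hlt; norm_num at hlt
  · have := norm_nonneg z
    rw [h2] at this; norm_num at this

/-- For `f(z) = z e^{i log log z}` (principal branch of log), one has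
`f''/f' = i(-1+i+log z)/(z log z (i+log z))` on a small upper half-disk, and
`∫_{𝔻(0,1/2)} |f''/f'|² ≤ 4π/log 2 + 4π/(3 log² 2)`. -/
theorem stmt13 :
    (∃ ε > (0 : ℝ), ∀ z : ℂ, 0 < z.im → norm z < ε →
      deriv (deriv (fun w : ℂ => w * Complex.exp (Complex.I * Complex.log (Complex.log w)))) z
        / deriv (fun w : ℂ => w * Complex.exp (Complex.I * Complex.log (Complex.log w))) z
      = Complex.I * (-1 + Complex.I + Complex.log z)
          / (z * Complex.log z * (Complex.I + Complex.log z))) ∧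
    (∫ z in Metric.ball (0 : ℂ) (1 / 2),
        norm
          (deriv (deriv (fun w : ℂ =>
              w * Complex.exp (Complex.I * Complex.log (Complex.log w)))) z
            / deriv (fun w : ℂ =>
              w * Complex.exp (Complex.I * Complex.log (Complex.log w))) z) ^ 2)
      ≤ 4 * Real.pi / Real.log 2 + 4 * Real.pi / (3 * Real.log 2 ^ 2) := by
  have hff : (fun w : ℂ => w * Complex.exp (Complex.I * Complex.log (Complex.log w))) = ff := rfl
  rw [hff]
  constructor
  · refine ⟨1/2, by norm_num, fun z him hlt => ?_⟩
    have him' : z.im ≠ 0 := ne_of_gt him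
    exact deriv_ratio him' (ILne him' hlt)
  · have hbm : MeasurableSet (Metric.ball (0:ℂ) (1/2)) := measurableSet_ball
    rw [← integral_indicator hbm, ← Complex.integral_comp_polarCoord_symm]
    have hTm : MeasurableSet (polarCoord.target) :=
      measurableSet_Ioi.prod measurableSet_Ioo
    set F1 : ℝ → ℝ := (Ioc (0:ℝ) (1/2)).indicator ψ with hF1
    set g1 : ℝ → ℝ := fun _ => 1 with hg1
    have hrestr : volume.restrict (polarCoord.target)
        = (volume.restrict (Ioi (0:ℝ))).prod (volume.restrict (Ioo (-Real.pi) Real.pi)) := by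
      rw [Measure.prod_restrict, ← Measure.volume_eq_prod]
      rfl
    have hl : (0.6931471803:ℝ) < Real.log 2 := Real.log_two_gt_d9
    have hl0 : (0:ℝ) < Real.log 2 := by linarith
    have hπ : (0:ℝ) < Real.pi := Real.pi_pos
    have hF1int : Integrable F1 (volume.restrict (Ioi (0:ℝ))) := by
      rw [hF1, integrable_indicator_iff measurableSet_Ioc]
      rw [IntegrableOn, Measure.restrict_restrict measurableSet_Ioc,
        inter_eq_left.2 (fun x hx => hx.1)]
      exact oneD_int
    have hg1int : Integrable g1 (volume.restrict (Ioo (-Real.pi) Real.pi)) := by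
      refine integrableOn_const (ne_of_lt ?_)
      rw [Real.volume_Ioo]
      exact ENNReal.ofReal_lt_top
    refine le_trans (integral_mono_of_nonneg ?_ ?_ ?_)
      (?_ : ∫ p in polarCoord.target, F1 p.1 * g1 p.2 ≤ _)
    · filter_upwards [ae_restrict_mem hTm] with p hp
      exact smul_nonneg (le_of_lt hp.1) (Set.indicator_nonneg (fun z _ => sq_nonneg _) _)
    · rw [hrestr]
      exact hF1int.mul_prod hg1int
    · have hN : (volume : Measure (ℝ×ℝ)) {p | p.2 = 0} = 0 := by
        have hset : {p : ℝ×ℝ | p.2 = 0} = (univ : Set ℝ) ×ˢ ({0} : Set ℝ) := by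
          ext p
          simp only [Set.mem_setOf_eq, Set.mem_prod, Set.mem_univ, Set.mem_singleton_iff,
            true_and]
        rw [hset, Measure.volume_eq_prod, Measure.prod_prod]
        simp
      have hae2 : ∀ᵐ p : ℝ×ℝ, p.2 ≠ 0 := by
        rw [ae_iff]
        simp only [ne_eq, not_not]
        exact hN
      filter_upwards [ae_restrict_mem hTm, ae_restrict_of_ae hae2] with p hp hp2
      have hp1 : 0 < p.1 := hp.1
      have habs : norm (Complex.polarCoord.symm p) = p.1 := by
        rw [Complex.norm_polarCoord_symm, abs_of_pos hp1]
      have him : (Complex.polarCoord.symm p).im ≠ 0 := by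
        have h1 : (Complex.polarCoord.symm p).im = p.1 * Real.sin p.2 := by
          rw [Complex.polarCoord_symm_apply]
          simp [Complex.mul_im, Complex.add_im, Complex.add_re, Complex.ofReal_re,
            Complex.ofReal_im, Complex.I_im, Complex.I_re, Complex.sin_ofReal_re,
            Complex.sin_ofReal_im, Complex.cos_ofReal_re, Complex.cos_ofReal_im]
        rw [h1]
        refine mul_ne_zero (ne_of_gt hp1) ?_
        intro hs
        exact hp2 ((Real.sin_eq_zero_iff_of_lt_of_lt hp.2.1 hp.2.2).1 hs)
      by_cases hcase : p.1 < 1/2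
      · have habs' : norm (Complex.polarCoord.symm p) < 1/2 := by rw [habs]; exact hcase
        have hzb : Complex.polarCoord.symm p ∈ Metric.ball (0:ℂ) (1/2) := by
          rw [Metric.mem_ball, dist_zero_right, habs]
          exact hcase
        rw [Set.indicator_of_mem hzb, deriv_ratio him (ILne him habs'), smul_eq_mul]
        have hb := bnd him habs'
        rw [habs] at hb
        have hmul := mul_le_mul_of_nonneg_left hb (le_of_lt hp1)
        refine hmul.trans (le_of_eq ?_)
        have hlogne : Real.log p.1 ≠ 0 := logne hp1 (by linarith)
        have hp1ne : p.1 ≠ 0 := ne_of_gt hp1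
        rw [hF1, Set.indicator_of_mem (Set.mem_Ioc.2 ⟨hp1, le_of_lt hcase⟩), hg1, ψ]
        field_simp
      · have hzb : Complex.polarCoord.symm p ∉ Metric.ball (0:ℂ) (1/2) := by
          rw [Metric.mem_ball, dist_zero_right, habs]
          exact fun hcon => hcase hcon
        rw [Set.indicator_of_notMem hzb, smul_zero]
        exact mul_nonneg (Set.indicator_nonneg (fun r hr => psi_nonneg hr.1) _) zero_le_one
    · rw [hrestr, integral_prod_mul]
      have hv1 : ∫ x, F1 x ∂(volume.restrict (Ioi (0:ℝ)))
          = 2*(Real.log 2)⁻¹ + (5/12)*((Real.log 2)⁻¹)^3 := by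
        rw [hF1, integral_indicator measurableSet_Ioc, Measure.restrict_restrict measurableSet_Ioc,
          inter_eq_left.2 (fun x hx => hx.1)]
        exact oneD_val
      have hv2 : ∫ x, g1 x ∂(volume.restrict (Ioo (-Real.pi) Real.pi)) = 2*Real.pi := by
        rw [hg1, integral_const]
        simp only [Measure.restrict_apply_univ, Real.volume_Ioo, smul_eq_mul, mul_one]
        rw [measureReal_restrict_apply_univ, Real.volume_real_Ioo, max_eq_left (by linarith)]
        ring
      rw [hv1, hv2]
      have hu0 : (0:ℝ) < (Real.log 2)⁻¹ := inv_pos.2 hl0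
      have hucancel : Real.log 2 * (Real.log 2)⁻¹ = 1 := mul_inv_cancel₀ (ne_of_gt hl0)
      have hul : (Real.log 2)⁻¹ ≤ 1.6 := by nlinarith
      have e1 : 4*Real.pi/Real.log 2 = 2*(Real.log 2)⁻¹ * (2*Real.pi) := by
        field_simp
        ring
      have hRHS : 4*Real.pi/(3*Real.log 2^2) = (4*Real.pi/3) * ((Real.log 2)⁻¹)^2 := by
        field_simp
      have h2 : (5/12)*((Real.log 2)⁻¹)^3 * (2*Real.pi) ≤ (4*Real.pi/3) * ((Real.log 2)⁻¹)^2 := by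
        nlinarith [mul_nonneg (mul_nonneg hπ.le (sq_nonneg ((Real.log 2)⁻¹)))
          (sub_nonneg.2 hul)]
      calc (2*(Real.log 2)⁻¹ + (5/12)*((Real.log 2)⁻¹)^3) * (2*Real.pi)
          = 2*(Real.log 2)⁻¹*(2*Real.pi) + (5/12)*((Real.log 2)⁻¹)^3*(2*Real.pi) := by ring
        _ ≤ 2*(Real.log 2)⁻¹*(2*Real.pi) + (4*Real.pi/3) * ((Real.log 2)⁻¹)^2 :=
            add_le_add_right h2 _
        _ = 4*Real.pi/Real.log 2 + 4*Real.pi/(3*Real.log 2^2) := by rw [e1, hRHS]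
end

section
/- If g is holomorphic on ℂ \ 𝔻̄ and g̃(z) = g(1/z) on 𝔻 \ {0}, then for z ∈ 𝔻 \ {0}: g̃''(z)/g̃'(z) - 2(g̃'(z)/g̃(z))|g̃(z)|²/(1+|g̃(z)|²) = -(1/z²)(g''(1/z)/g'(1/z) - 2(g'(1/z)/g(1/z))|g(1/z)|²/(1+|g(1/z)|²) + 2z); consequently ∫_𝔻 |g̃''/g̃' - 2(g̃'/g̃)|g̃|²/(1+|g̃|²)|² |dz|² = ∫_{ℂ\𝔻̄} |g''/g' - 2(g'/g)|g|²/(1+|g|²) + 2/z|² |dz|². -/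
open MeasureTheory Metric

lemma det_aux (c : ℂ) :
    (((1 : ℂ →L[ℂ] ℂ).smulRight c).restrictScalars ℝ).det = Complex.normSq c := by
  have h : ((((1 : ℂ →L[ℂ] ℂ).smulRight c).restrictScalars ℝ : ℂ →L[ℝ] ℂ) : ℂ →ₗ[ℝ] ℂ)
      = Algebra.lmul ℝ ℂ c := by
    ext z
    simp [mul_comm]
  rw [ContinuousLinearMap.det, h]
  have := Algebra.norm_complex_apply c
  rwa [Algebra.norm_apply] at this

lemma mem_aux {z : ℂ} (hz : z ∈ ball (0:ℂ) 1 \ {0}) : 1/z ∈ (closedBall (0:ℂ) 1)ᶜ := by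
  obtain ⟨h1, h0⟩ := hz
  simp only [mem_ball, Complex.dist_eq, sub_zero] at h1
  simp only [Set.mem_compl_iff, mem_closedBall, Complex.dist_eq, sub_zero, not_le]
  have h0' : z ≠ 0 := h0
  have : ‖z‖ ≠ 0 := by simpa using h0'
  rw [one_div, norm_inv]
  exact (one_lt_inv₀ (norm_pos_iff.mpr h0')).mpr h1

lemma deriv1_aux {g : ℂ → ℂ} (hg : DifferentiableOn ℂ g (closedBall (0:ℂ) 1)ᶜ)
    {z : ℂ} (hz : z ∈ ball (0:ℂ) 1 \ {0}) :
    HasDerivAt (fun w => g (1/w)) (-(deriv g (1/z)) / z^2) z := by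
  have h0 : z ≠ 0 := hz.2
  have h1 : HasDerivAt (fun w : ℂ => 1/w) (-(z^2)⁻¹) z := by
    simpa [one_div] using hasDerivAt_inv h0
  have h2 : HasDerivAt g (deriv g (1/z)) (1/z) :=
    (hg.differentiableAt ((isClosed_closedBall.isOpen_compl).mem_nhds (mem_aux hz))).hasDerivAt
  have := h2.comp z h1
  exact this.congr_deriv (by ring)

lemma derivG_aux {g : ℂ → ℂ} (hg : DifferentiableOn ℂ g (closedBall (0:ℂ) 1)ᶜ)
    {z : ℂ} (hz : z ∈ ball (0:ℂ) 1 \ {0}) :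
    HasDerivAt (fun w => deriv g (1/w)) (-(deriv (deriv g) (1/z)) / z^2) z := by
  have h0 : z ≠ 0 := hz.2
  have h1 : HasDerivAt (fun w : ℂ => 1/w) (-(z^2)⁻¹) z := by
    simpa [one_div] using hasDerivAt_inv h0
  have hG : AnalyticOnNhd ℂ (deriv g) (closedBall (0:ℂ) 1)ᶜ :=
    (hg.analyticOnNhd isClosed_closedBall.isOpen_compl).deriv
  have h2 : HasDerivAt (deriv g) (deriv (deriv g) (1/z)) (1/z) :=
    ((hG _ (mem_aux hz)).differentiableAt).hasDerivAt
  have := h2.comp z h1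
  exact this.congr_deriv (by ring)

lemma deriv2_aux {g : ℂ → ℂ} (hg : DifferentiableOn ℂ g (closedBall (0:ℂ) 1)ᶜ)
    {z : ℂ} (hz : z ∈ ball (0:ℂ) 1 \ {0}) :
    deriv (deriv (fun w => g (1/w))) z
      = deriv (deriv g) (1/z) / z^4 + 2 * deriv g (1/z) / z^3 := by
  have h0 : z ≠ 0 := hz.2
  have hT : IsOpen (ball (0:ℂ) 1 \ {0}) := isOpen_ball.sdiff isClosed_singleton
  have hev : deriv (fun w => g (1/w)) =ᶠ[nhds z] fun w => -(deriv g (1/w)) / w^2 := by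
    filter_upwards [hT.mem_nhds hz] with w hw
    exact (deriv1_aux hg hw).deriv
  rw [Filter.EventuallyEq.deriv_eq hev]
  have h4 : HasDerivAt (fun w => -(deriv g (1/w)) / w^2)
      (deriv (deriv g) (1/z) / z^4 + 2 * deriv g (1/z) / z^3) z := by
    have hm := ((derivG_aux hg hz).neg.mul
      ((hasDerivAt_pow 2 z).inv (pow_ne_zero 2 h0)))
    have : (fun w : ℂ => -(deriv g (1/w)) / w^2)
        = fun w : ℂ => -(deriv g (1/w)) * (w^2)⁻¹ := by
      funext w; rw [div_eq_mul_inv]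
    rw [this]
    exact hm.congr_deriv (by
      simp only [Pi.inv_apply, Pi.neg_apply]
      norm_num
      field_simp)
  exact h4.deriv

lemma pointwise_aux {g : ℂ → ℂ} (hg : DifferentiableOn ℂ g (closedBall (0:ℂ) 1)ᶜ)
    (hgne : ∀ z ∈ (closedBall (0 : ℂ) 1)ᶜ, g z ≠ 0)
    (hg'ne : ∀ z ∈ (closedBall (0 : ℂ) 1)ᶜ, deriv g z ≠ 0)
    {z : ℂ} (hz : z ∈ ball (0:ℂ) 1 \ {0}) :
    deriv (deriv (fun w => g (1 / w))) z / deriv (fun w => g (1 / w)) z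
        - 2 * (deriv (fun w => g (1 / w)) z / g (1 / z))
            * (((norm (g (1 / z)) ^ 2 : ℝ)
                / (1 + norm (g (1 / z)) ^ 2 : ℝ) : ℝ) : ℂ)
      = -(1 / z ^ 2) * (deriv (deriv g) (1 / z) / deriv g (1 / z)
          - 2 * (deriv g (1 / z) / g (1 / z))
              * (((norm (g (1 / z)) ^ 2 : ℝ)
                  / (1 + norm (g (1 / z)) ^ 2 : ℝ) : ℝ) : ℂ)
          + 2 * z) := by
  have h0 : z ≠ 0 := hz.2
  have hD1 : deriv g (1/z) ≠ 0 := hg'ne _ (mem_aux hz)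
  have hg0 : g (1/z) ≠ 0 := hgne _ (mem_aux hz)
  rw [(deriv1_aux hg hz).deriv, deriv2_aux hg hz]
  set ρ : ℂ := (((norm (g (1 / z)) ^ 2 : ℝ)
      / (1 + norm (g (1 / z)) ^ 2 : ℝ) : ℝ) : ℂ)
  set D2 := deriv (deriv g) (1/z)
  set D1 := deriv g (1/z)
  set G := g (1/z)
  field_simp [h0, hD1, hg0]
  ring

lemma image_aux : (fun z : ℂ => z⁻¹) '' (ball (0:ℂ) 1 \ {0}) = (closedBall (0:ℂ) 1)ᶜ := by
  ext w
  simp only [Set.mem_image, Set.mem_diff, mem_ball, Set.mem_singleton_iff,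
    Set.mem_compl_iff, mem_closedBall, Complex.dist_eq, sub_zero, not_le]
  constructor
  · rintro ⟨z, ⟨hz1, hz0⟩, rfl⟩
    have : ‖z‖ ≠ 0 := by simpa using hz0
    rw [norm_inv]
    exact (one_lt_inv₀ (norm_pos_iff.mpr hz0)).mpr hz1
  · intro hw
    have hw0 : w ≠ 0 := by
      intro h; rw [h] at hw; simp at hw; linarith
    refine ⟨w⁻¹, ⟨?_, inv_ne_zero hw0⟩, inv_inv w⟩
    rw [norm_inv]
    exact inv_lt_one_of_one_lt₀ hw

/-- For `g` holomorphic on `ℂ ∖ 𝔻̄` (with `g`, `g'` nonvanishing there) and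
`g̃(z) = g(1/z)`, the pointwise identity
`g̃''/g̃' - 2(g̃'/g̃)|g̃|²/(1+|g̃|²) = -(1/z²)(g''/g' - 2(g'/g)|g|²/(1+|g|²) + 2z)∘(1/z)`
holds on `𝔻 ∖ {0}`, and consequently the corresponding squared integrals agree. -/
theorem stmt18 (g : ℂ → ℂ)
    (hg : DifferentiableOn ℂ g (Metric.closedBall (0 : ℂ) 1)ᶜ)
    (hgne : ∀ z ∈ (Metric.closedBall (0 : ℂ) 1)ᶜ, g z ≠ 0)
    (hg'ne : ∀ z ∈ (Metric.closedBall (0 : ℂ) 1)ᶜ, deriv g z ≠ 0) :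
    (∀ z ∈ Metric.ball (0 : ℂ) 1 \ {0},
      deriv (deriv (fun w => g (1 / w))) z / deriv (fun w => g (1 / w)) z
        - 2 * (deriv (fun w => g (1 / w)) z / g (1 / z))
            * (((norm (g (1 / z)) ^ 2 : ℝ)
                / (1 + norm (g (1 / z)) ^ 2 : ℝ) : ℝ) : ℂ)
      = -(1 / z ^ 2) * (deriv (deriv g) (1 / z) / deriv g (1 / z)
          - 2 * (deriv g (1 / z) / g (1 / z))
              * (((norm (g (1 / z)) ^ 2 : ℝ)
                  / (1 + norm (g (1 / z)) ^ 2 : ℝ) : ℝ) : ℂ)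
          + 2 * z)) ∧
    (∫ z in Metric.ball (0 : ℂ) 1,
        norm (deriv (deriv (fun w => g (1 / w))) z / deriv (fun w => g (1 / w)) z
          - 2 * (deriv (fun w => g (1 / w)) z / g (1 / z))
              * (((norm (g (1 / z)) ^ 2 : ℝ)
                  / (1 + norm (g (1 / z)) ^ 2 : ℝ) : ℝ) : ℂ)) ^ 2
      = ∫ z in (Metric.closedBall (0 : ℂ) 1)ᶜ,
          norm (deriv (deriv g) z / deriv g z
            - 2 * (deriv g z / g z)
                * (((norm (g z) ^ 2 : ℝ) / (1 + norm (g z) ^ 2 : ℝ) : ℝ) : ℂ)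
            + 2 / z) ^ 2) := by
  refine ⟨fun z hz => pointwise_aux hg hgne hg'ne hz, ?_⟩
  have hTmeas : MeasurableSet (ball (0:ℂ) 1 \ {0}) :=
    measurableSet_ball.diff (measurableSet_singleton 0)
  have hae : (ball (0:ℂ) 1 \ {0} : Set ℂ) =ᵐ[volume] ball (0:ℂ) 1 :=
    diff_ae_eq_self.mpr (measure_mono_null Set.inter_subset_right (measure_singleton 0))
  have hfd : ∀ x ∈ ball (0:ℂ) 1 \ {0}, HasFDerivWithinAt (fun z : ℂ => z⁻¹)
      (((1 : ℂ →L[ℂ] ℂ).smulRight (-(x^2)⁻¹)).restrictScalars ℝ) (ball (0:ℂ) 1 \ {0}) x :=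
    fun x hx =>
      (((hasDerivAt_inv hx.2).hasFDerivAt).restrictScalars ℝ).hasFDerivWithinAt
  have hinj : Set.InjOn (fun z : ℂ => z⁻¹) (ball (0:ℂ) 1 \ {0}) := by
    intro a _ b _ h
    simpa using congrArg (·⁻¹) h
  calc
    (∫ z in Metric.ball (0 : ℂ) 1,
        norm (deriv (deriv (fun w => g (1 / w))) z / deriv (fun w => g (1 / w)) z
          - 2 * (deriv (fun w => g (1 / w)) z / g (1 / z))
              * (((norm (g (1 / z)) ^ 2 : ℝ)
                  / (1 + norm (g (1 / z)) ^ 2 : ℝ) : ℝ) : ℂ)) ^ 2)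
      = ∫ z in ball (0:ℂ) 1 \ {0},
        norm (deriv (deriv (fun w => g (1 / w))) z / deriv (fun w => g (1 / w)) z
          - 2 * (deriv (fun w => g (1 / w)) z / g (1 / z))
              * (((norm (g (1 / z)) ^ 2 : ℝ)
                  / (1 + norm (g (1 / z)) ^ 2 : ℝ) : ℝ) : ℂ)) ^ 2 :=
        (setIntegral_congr_set hae).symm
    _ = ∫ z in ball (0:ℂ) 1 \ {0},
          |((((1 : ℂ →L[ℂ] ℂ).smulRight (-(z^2)⁻¹)).restrictScalars ℝ)).det| •
            (norm (deriv (deriv g) z⁻¹ / deriv g z⁻¹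
              - 2 * (deriv g z⁻¹ / g z⁻¹)
                  * (((norm (g z⁻¹) ^ 2 : ℝ)
                      / (1 + norm (g z⁻¹) ^ 2 : ℝ) : ℝ) : ℂ)
              + 2 / z⁻¹) ^ 2) := by
        refine setIntegral_congr_fun hTmeas (fun z hz => ?_)
        have h0 : z ≠ 0 := hz.2
        rw [pointwise_aux hg hgne hg'ne hz, det_aux,
          abs_of_nonneg (Complex.normSq_nonneg _), smul_eq_mul, norm_mul, mul_pow,
          Complex.sq_norm]
        have h2z : (2:ℂ)/z⁻¹ = 2*z := by rw [div_eq_mul_inv, inv_inv]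
        simp only [one_div, h2z]
    _ = ∫ w in (fun z : ℂ => z⁻¹) '' (ball (0:ℂ) 1 \ {0}),
          norm (deriv (deriv g) w / deriv g w
            - 2 * (deriv g w / g w)
                * (((norm (g w) ^ 2 : ℝ) / (1 + norm (g w) ^ 2 : ℝ) : ℝ) : ℂ)
            + 2 / w) ^ 2 :=
        (integral_image_eq_integral_abs_det_fderiv_smul volume hTmeas hfd hinj
          (fun w => norm (deriv (deriv g) w / deriv g w
            - 2 * (deriv g w / g w)
                * (((norm (g w) ^ 2 : ℝ) / (1 + norm (g w) ^ 2 : ℝ) : ℝ) : ℂ)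
            + 2 / w) ^ 2)).symm
    _ = ∫ z in (Metric.closedBall (0 : ℂ) 1)ᶜ,
          norm (deriv (deriv g) z / deriv g z
            - 2 * (deriv g z / g z)
                * (((norm (g z) ^ 2 : ℝ) / (1 + norm (g z) ^ 2 : ℝ) : ℝ) : ℂ)
            + 2 / z) ^ 2 := by rw [image_aux]
end
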